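/- Let x ∈ R^N, y ∈ R^M, Φ an N×m matrix and Φ̃ an M×m matrix with Φ of full column rank m. Let θ̂(x) = (Φ⊤Φ)⁻¹Φ⊤x and θ̂(x,y) = (Φ⊤Φ + Φ̃⊤Φ̃)⁻¹(Φ⊤x + Φ̃⊤y). Then ‖x − Φθ̂(x,y)‖² + ‖y − Φ̃θ̂(x,y)‖² − ‖x − Φθ̂(x)‖² = ‖y − Φ̃θ̂(x)‖² − (y − Φ̃θ̂(x))⊤ Φ̃ (Φ⊤Φ + Φ̃⊤Φ̃)⁻¹ Φ̃⊤ (y − Φ̃θ̂(x)), and this quantity is nonnegative. -/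

import Mathlib

open Matrix

private lemma aux_dot_mulVec {k l : ℕ} (u : Fin k → ℝ) (C : Matrix (Fin k) (Fin l) ℝ)
    (w : Fin l → ℝ) : u ⬝ᵥ C *ᵥ w = (Cᵀ *ᵥ u) ⬝ᵥ w := by
  rw [dotProduct_mulVec, mulVec_transpose]

private lemma aux_posdef {N m : ℕ} (Φ : Matrix (Fin N) (Fin m) ℝ) (hΦ : Φ.rank = m) :
    (Φᵀ * Φ).PosDef := by
  have hinj : Function.Injective Φ.mulVecLin := by
    rw [← LinearMap.ker_eq_bot]
    have h1 := LinearMap.finrank_range_add_finrank_ker Φ.mulVecLin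
    have h0 : Module.finrank ℝ (LinearMap.ker Φ.mulVecLin) = 0 := by
      have h2 : Φ.rank = Module.finrank ℝ (LinearMap.range Φ.mulVecLin) := rfl
      simp [Module.finrank_pi] at h1
      omega
    exact Submodule.finrank_eq_zero.mp h0
  refine posDef_iff_dotProduct_mulVec.mpr
    ⟨by simpa using isHermitian_conjTranspose_mul_self Φ, fun v hv => ?_⟩
  have hne : Φ *ᵥ v ≠ 0 := fun h => hv (hinj (by simpa [Matrix.mulVecLin_apply] using h))
  have : star v = v := by simp
  rw [this, ← mulVec_mulVec, aux_dot_mulVec, transpose_transpose]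
  exact lt_of_le_of_ne (Finset.sum_nonneg fun i _ => mul_self_nonneg _)
    (fun h => hne (dotProduct_self_eq_zero.mp h.symm))

theorem stmt_17 (N M m : ℕ) (x : Fin N → ℝ) (y : Fin M → ℝ)
    (Φ : Matrix (Fin N) (Fin m) ℝ) (Φt : Matrix (Fin M) (Fin m) ℝ)
    (hΦ : Φ.rank = m) :
    let θx := (Φᵀ * Φ)⁻¹.mulVec (Φᵀ.mulVec x)
    let θxy := (Φᵀ * Φ + Φtᵀ * Φt)⁻¹.mulVec (Φᵀ.mulVec x + Φtᵀ.mulVec y)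
    let r := y - Φt.mulVec θx
    ((x - Φ.mulVec θxy) ⬝ᵥ (x - Φ.mulVec θxy)
        + (y - Φt.mulVec θxy) ⬝ᵥ (y - Φt.mulVec θxy)
        - (x - Φ.mulVec θx) ⬝ᵥ (x - Φ.mulVec θx)
      = r ⬝ᵥ r - r ⬝ᵥ (Φt * (Φᵀ * Φ + Φtᵀ * Φt)⁻¹ * Φtᵀ).mulVec r) ∧
    0 ≤ r ⬝ᵥ r - r ⬝ᵥ (Φt * (Φᵀ * Φ + Φtᵀ * Φt)⁻¹ * Φtᵀ).mulVec r := by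
  intro θx θxy r
  have hA : (Φᵀ * Φ).PosDef := aux_posdef Φ hΦ
  have hB : (Φtᵀ * Φt).PosSemidef := by
    have := posSemidef_conjTranspose_mul_self Φt
    simpa using this
  have hS : (Φᵀ * Φ + Φtᵀ * Φt).PosDef := hA.add_posSemidef hB
  have hAd : IsUnit (Φᵀ * Φ).det := hA.det_pos.ne'.isUnit
  have hSd : IsUnit (Φᵀ * Φ + Φtᵀ * Φt).det := hS.det_pos.ne'.isUnit
  -- normal equations
  have hθx : (Φᵀ * Φ) *ᵥ θx = Φᵀ *ᵥ x := by
    show (Φᵀ * Φ) *ᵥ ((Φᵀ * Φ)⁻¹ *ᵥ (Φᵀ *ᵥ x)) = _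
    rw [mulVec_mulVec, Matrix.mul_nonsing_inv _ hAd, one_mulVec]
  have hθxy : (Φᵀ * Φ + Φtᵀ * Φt) *ᵥ θxy = Φᵀ *ᵥ x + Φtᵀ *ᵥ y := by
    show (Φᵀ * Φ + Φtᵀ * Φt) *ᵥ ((Φᵀ * Φ + Φtᵀ * Φt)⁻¹ *ᵥ _) = _
    rw [mulVec_mulVec, Matrix.mul_nonsing_inv _ hSd, one_mulVec]
  set u : Fin N → ℝ := x - Φ *ᵥ θx with hu
  set δ : Fin m → ℝ := θxy - θx with hδ
  have horth : Φᵀ *ᵥ u = 0 := by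
    rw [hu, mulVec_sub, mulVec_mulVec, hθx, sub_self]
  have hr : Φtᵀ *ᵥ r = (Φᵀ * Φ + Φtᵀ * Φt) *ᵥ δ := by
    show Φtᵀ *ᵥ (y - Φt *ᵥ θx) = (Φᵀ * Φ + Φtᵀ * Φt) *ᵥ (θxy - θx)
    rw [mulVec_sub (Φᵀ * Φ + Φtᵀ * Φt) θxy θx, hθxy, mulVec_sub Φtᵀ,
      add_mulVec, hθx, mulVec_mulVec]
    abel
  set p : Fin N → ℝ := Φ *ᵥ δ with hp
  set q : Fin M → ℝ := Φt *ᵥ δ with hq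
  -- the big matrix applied to r equals q
  have hmat : (Φt * (Φᵀ * Φ + Φtᵀ * Φt)⁻¹ * Φtᵀ) *ᵥ r = q := by
    rw [← mulVec_mulVec, hr, mulVec_mulVec, Matrix.mul_assoc,
      Matrix.nonsing_inv_mul _ hSd, Matrix.mul_one, hq]
  -- scalar identities
  have h1 : u ⬝ᵥ p = 0 := by
    rw [hp, aux_dot_mulVec, horth, zero_dotProduct]
  have h2 : r ⬝ᵥ q = p ⬝ᵥ p + q ⬝ᵥ q := by
    have : r ⬝ᵥ q = (Φtᵀ *ᵥ r) ⬝ᵥ δ := by rw [hq, aux_dot_mulVec]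
    rw [this, hr, add_mulVec, dotProduct_comm, dotProduct_add]
    rw [← mulVec_mulVec δ Φᵀ Φ, ← mulVec_mulVec δ Φtᵀ Φt]
    rw [aux_dot_mulVec δ Φᵀ, aux_dot_mulVec δ Φtᵀ, transpose_transpose,
      transpose_transpose, ← hp, ← hq]
  -- rewrite vectors
  have hxv : x - Φ *ᵥ θxy = u - p := by
    rw [hu, hp, hδ, mulVec_sub]; abel
  have hyv : y - Φt *ᵥ θxy = r - q := by
    show y - Φt *ᵥ θxy = (y - Φt *ᵥ θx) - q
    rw [hq, hδ, mulVec_sub]; abel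
  have hrq : r ⬝ᵥ q = q ⬝ᵥ r := dotProduct_comm r q
  have hup : u ⬝ᵥ p = p ⬝ᵥ u := dotProduct_comm u p
  constructor
  · show (x - Φ *ᵥ θxy) ⬝ᵥ (x - Φ *ᵥ θxy) + (y - Φt *ᵥ θxy) ⬝ᵥ (y - Φt *ᵥ θxy)
      - u ⬝ᵥ u = r ⬝ᵥ r - r ⬝ᵥ (Φt * (Φᵀ * Φ + Φtᵀ * Φt)⁻¹ * Φtᵀ) *ᵥ r
    rw [hxv, hyv, hmat]
    simp only [dotProduct_sub, sub_dotProduct]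
    linarith [h1, h2, hrq, hup]
  · show 0 ≤ r ⬝ᵥ r - r ⬝ᵥ (Φt * (Φᵀ * Φ + Φtᵀ * Φt)⁻¹ * Φtᵀ) *ᵥ r
    rw [hmat]
    have hnn1 : 0 ≤ (r - q) ⬝ᵥ (r - q) := Finset.sum_nonneg fun i _ => mul_self_nonneg _
    have hnn2 : 0 ≤ p ⬝ᵥ p := Finset.sum_nonneg fun i _ => mul_self_nonneg _
    simp only [dotProduct_sub, sub_dotProduct] at hnn1
    linarith [h2, hrq]
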